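/- For a Kelvin–Planck theory with set of hotness levels H, the hotter-than relation ≻ is a strict partial order on H: it is irreflexive, antisymmetric, and transitive. -/

import Mathlib

open Set

noncomputable section

/-- Signed regular Borel measures on `X`, modeled via the Riesz representation
theorem as the weak-star dual of `C(X, ℝ)`. -/
abbrev Meas (X : Type*) [TopologicalSpace X] := WeakDual ℝ C(X, ℝ)

/-- The ambient space containing `V(X) = M°(X) ⊕ M(X)`; membership in the
subspace `M°(X)` of the first component is expressed by `p.1 1 = 0`. -/
abbrev VSp (X : Type*) [TopologicalSpace X] := Meas X × Meas X

/-- The cone of nonnegative measures. -/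
def PosMeas (X : Type*) [TopologicalSpace X] : Set (Meas X) :=
  {μ | ∀ f : C(X, ℝ), (∀ x, 0 ≤ f x) → 0 ≤ μ f}

variable {X : Type*} [TopologicalSpace X]

/-- The Dirac measure at a point, i.e. the evaluation functional. -/
def dirac (x : X) : Meas X :=
  (⟨⟨⟨fun f => f x, fun _ _ => rfl⟩, fun _ _ => rfl⟩,
    continuous_eval_const x⟩ : C(X, ℝ) →L[ℝ] ℝ)

/-- The set of nonnegative multiples of members of `P`. -/
def coneOf (P : Set (VSp X)) : Set (VSp X) :=
  {x | ∃ c : ℝ, 0 ≤ c ∧ ∃ p ∈ P, x = c • p}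

/-- `\hat P`, the weak-star closure of the cone generated by `P`. -/
def hatP (P : Set (VSp X)) : Set (VSp X) :=
  closure (coneOf P)

/-- A thermodynamical theory: processes have change of condition with total mass
zero (i.e. `P ⊆ V(X)`), and `\hat P` is convex. -/
def IsThermoTheory (P : Set (VSp X)) : Prop :=
  (∀ p ∈ P, p.1 (1 : C(X, ℝ)) = 0) ∧ Convex ℝ (hatP P)

/-- A Kelvin–Planck theory: a thermodynamical theory with
`\hat P ∩ ({0} × M₊(X)) = {(0,0)}`. -/
def IsKelvinPlanck (P : Set (VSp X)) : Prop :=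
  IsThermoTheory P ∧ hatP P ∩ (({0} : Set (Meas X)) ×ˢ PosMeas X) = {(0, 0)}

/-- A Clausius–Duhem pair `(η, T)` for the theory `P`: `η` and `T` are continuous,
`T` is strictly positive, and for every continuous `β` equal pointwise to `1/T`
(such a `β` exists, and is unique, by positivity of `T`), the Clausius–Duhem
inequality `∫ η d(Δm) ≥ ∫ (1/T) dq` holds for every process in `P`. -/
def IsCDPair (P : Set (VSp X)) (η T : C(X, ℝ)) : Prop :=
  (∀ x, 0 < T x) ∧
    ∀ β : C(X, ℝ), (∀ x, β x = (T x)⁻¹) → ∀ p ∈ P, p.2 β ≤ p.1 η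

/-- A Clausius–Duhem temperature scale. -/
def IsCDTemp (P : Set (VSp X)) (T : C(X, ℝ)) : Prop :=
  ∃ η : C(X, ℝ), IsCDPair P η T

/-- Two states are of the same hotness: both `(0, δ_a − δ_b)` and `(0, δ_b − δ_a)`
belong to `\hat P`. -/
def SameHotness (P : Set (VSp X)) (a b : X) : Prop :=
  ((0 : Meas X), dirac a - dirac b) ∈ hatP P ∧
    ((0 : Meas X), dirac b - dirac a) ∈ hatP P

/-- The hotness level of a state. -/
def hotnessLevel (P : Set (VSp X)) (a : X) : Set X :=
  {b | SameHotness P a b}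

/-- A subset of the state space that is a hotness level. -/
def IsHotnessLevel (P : Set (VSp X)) (h : Set X) : Prop :=
  ∃ a : X, h = hotnessLevel P a

/-- The (signed) measure `μ` is supported in the set `A`: `μ` annihilates every
continuous function vanishing on `A`. -/
def SuppIn (μ : Meas X) (A : Set X) : Prop :=
  ∀ f : C(X, ℝ), (∀ x ∈ A, f x = 0) → μ f = 0

/-- `\hat Q` contains a passive heat transfer from hotness level `h` to `h'`:
an element `(0, μ − μ')` of `\hat Q` with `μ, μ'` nonnegative, `supp μ ⊆ h`,
`supp μ' ⊆ h'` and `μ(h) = μ'(h') > 0` (the common value being the total mass). -/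
def IsPassiveHT (Q : Set (VSp X)) (h h' : Set X) : Prop :=
  ∃ μ μ' : Meas X, μ ∈ PosMeas X ∧ μ' ∈ PosMeas X ∧ SuppIn μ h ∧ SuppIn μ' h' ∧
    μ (1 : C(X, ℝ)) = μ' (1 : C(X, ℝ)) ∧ 0 < μ (1 : C(X, ℝ)) ∧
    ((0 : Meas X), μ - μ') ∈ hatP Q

/-- Hotness level `h'` is hotter than `h`: the levels are distinct and every
thermodynamical theory whose closed process cone contains `P` together with a
passive heat transfer from `h` to `h'` fails to be a Kelvin–Planck theory. -/
def Hotter (P : Set (VSp X)) (h' h : Set X) : Prop :=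
  h' ≠ h ∧ ∀ Pd : Set (VSp X), IsThermoTheory Pd → P ⊆ hatP Pd →
    IsPassiveHT Pd h h' → ¬ IsKelvinPlanck Pd

/-- State `a` is hotter than state `b`. -/
def HotterState (P : Set (VSp X)) (a b : X) : Prop :=
  Hotter P (hotnessLevel P a) (hotnessLevel P b)

/-- A Carnot element of the theory `P` operating between hotness levels `h'` and
`h`: a reversible cyclic element `(0, μ' − μ)` with `μ', μ` nonzero nonnegative
measures supported in `h'`, `h` respectively. -/
def IsCarnotBetween (P : Set (VSp X)) (h' h : Set X) (p : VSp X) : Prop :=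
  p ∈ hatP P ∧ -p ∈ hatP P ∧
    ∃ μ' μ : Meas X, μ' ∈ PosMeas X ∧ μ ∈ PosMeas X ∧ μ' ≠ 0 ∧ μ ≠ 0 ∧
      SuppIn μ' h' ∧ SuppIn μ h ∧ p = ((0 : Meas X), μ' - μ)

end


section AuxProof

variable {X : Type*} [TopologicalSpace X]

instance : LocallyConvexSpace ℝ (WeakDual ℝ C(X, ℝ)) := WeakBilin.locallyConvexSpace

lemma mem_hatP_of_mem {P : Set (VSp X)} {p : VSp X} (hp : p ∈ P) : p ∈ hatP P :=
  subset_closure ⟨1, zero_le_one, p, hp, (one_smul ℝ p).symm⟩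

lemma zero_mem_hatP {P : Set (VSp X)} (hP : IsKelvinPlanck P) :
    (((0 : Meas X), (0 : Meas X)) : VSp X) ∈ hatP P := by
  have h : (((0 : Meas X), (0 : Meas X)) : VSp X) ∈
      hatP P ∩ (({0} : Set (Meas X)) ×ˢ PosMeas X) := by
    rw [hP.2]; exact rfl
  exact h.1

lemma smul_mem_hatP {P : Set (VSp X)} {c : ℝ} (hc : 0 ≤ c) {x : VSp X} (hx : x ∈ hatP P) :
    c • x ∈ hatP P := by
  have hmaps : (fun y : VSp X => c • y) '' coneOf P ⊆ coneOf P := by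
    rintro _ ⟨y, ⟨d, hd, p, hp, rfl⟩, rfl⟩
    exact ⟨c * d, mul_nonneg hc hd, p, hp, smul_smul c d p⟩
  have himg := image_closure_subset_closure_image (f := fun y : VSp X => c • y)
    (continuous_const_smul c) (s := coneOf P)
  exact closure_mono hmaps (himg ⟨x, hx, rfl⟩)

lemma hatP_fst_one {P : Set (VSp X)} (hT : IsThermoTheory P) {p : VSp X} (hp : p ∈ hatP P) :
    p.1 (1 : C(X, ℝ)) = 0 := by
  have hcl : IsClosed {q : VSp X | q.1 (1 : C(X, ℝ)) = 0} :=
    isClosed_eq ((WeakDual.eval_continuous (1 : C(X, ℝ))).comp continuous_fst) continuous_const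
  have hsub : coneOf P ⊆ {q : VSp X | q.1 (1 : C(X, ℝ)) = 0} := by
    rintro _ ⟨c, hc, p', hp', rfl⟩
    have h1 : ((c • p').1 : Meas X) (1 : C(X, ℝ)) = c * p'.1 (1 : C(X, ℝ)) := rfl
    simp only [mem_setOf_eq, h1, hT.1 p' hp', mul_zero]
  exact closure_minimal hsub hcl hp

lemma posMeas_apply_nonneg {ν : Meas X} (hν : ν ∈ PosMeas X) {f : C(X, ℝ)}
    (hf : ∀ x, 0 ≤ f x) : 0 ≤ ν f := hν f hf

lemma posMeas_abs_le [CompactSpace X] {ν : Meas X} (hν : ν ∈ PosMeas X) (f : C(X, ℝ)) :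
    |ν f| ≤ ν (1 : C(X, ℝ)) * ‖f‖ := by
  have h1 : 0 ≤ ν (‖f‖ • (1 : C(X, ℝ)) - f) := by
    apply hν
    intro x
    have := f.norm_coe_le_norm x
    simp only [ContinuousMap.sub_apply, ContinuousMap.smul_apply, ContinuousMap.one_apply,
      smul_eq_mul, mul_one, sub_nonneg]
    exact le_trans (le_abs_self _) (by simpa [Real.norm_eq_abs] using this)
  have h2 : 0 ≤ ν (‖f‖ • (1 : C(X, ℝ)) + f) := by
    apply hν
    intro x
    have := f.norm_coe_le_norm x
    simp only [ContinuousMap.add_apply, ContinuousMap.smul_apply, ContinuousMap.one_apply,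
      smul_eq_mul, mul_one]
    have : -f x ≤ ‖f‖ := le_trans (neg_le_abs _) (by simpa [Real.norm_eq_abs] using this)
    linarith
  rw [map_sub, map_smul, smul_eq_mul] at h1
  rw [map_add, map_smul, smul_eq_mul] at h2
  rw [abs_le]
  have hcomm : ν (1 : C(X, ℝ)) * ‖f‖ = ‖f‖ * ν (1 : C(X, ℝ)) := mul_comm _ _
  constructor
  · linarith
  · linarith

lemma posMeas_eq_zero [CompactSpace X] {ν : Meas X} (hν : ν ∈ PosMeas X)
    (h1 : ν (1 : C(X, ℝ)) = 0) : ν = 0 := by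
  apply DFunLike.ext
  intro f
  have := posMeas_abs_le hν f
  rw [h1, zero_mul] at this
  have habs : |ν f| ≤ 0 := this
  have : ν f = 0 := abs_nonpos_iff.mp habs
  exact this

lemma isClosed_posMeas : IsClosed (PosMeas X) := by
  have heq : PosMeas X =
      ⋂ f ∈ {f : C(X, ℝ) | ∀ x, 0 ≤ f x}, {μ : Meas X | 0 ≤ μ f} := by
    ext μ
    simp only [PosMeas, mem_setOf_eq, mem_iInter, mem_setOf_eq]
  rw [heq]
  exact isClosed_biInter fun f _ => isClosed_le continuous_const (WeakDual.eval_continuous f)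

lemma isCompact_probSet [CompactSpace X] :
    IsCompact {ν : Meas X | ν ∈ PosMeas X ∧ ν (1 : C(X, ℝ)) = 1} := by
  have hball := WeakDual.isCompact_closedBall (𝕜 := ℝ) (E := C(X, ℝ)) 0 1
  apply hball.of_isClosed_subset
  · exact isClosed_posMeas.inter (isClosed_eq (WeakDual.eval_continuous _) continuous_const)
  · rintro ν ⟨hν, h1⟩
    simp only [Set.mem_preimage, Metric.mem_closedBall, dist_zero_right]
    refine ContinuousLinearMap.opNorm_le_bound _ zero_le_one fun f => ?_
    have := posMeas_abs_le hν f
    rw [h1, one_mul] at this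
    simpa [Real.norm_eq_abs] using this

lemma convex_probSet : Convex ℝ {ν : Meas X | ν ∈ PosMeas X ∧ ν (1 : C(X, ℝ)) = 1} := by
  rintro μ ⟨hμ, hμ1⟩ ν ⟨hν, hν1⟩ a b ha hb hab
  constructor
  · intro f hf
    have h1 : (a • μ + b • ν) f = a * μ f + b * ν f := rfl
    rw [h1]
    exact add_nonneg (mul_nonneg ha (hμ f hf)) (mul_nonneg hb (hν f hf))
  · have h1 : (a • μ + b • ν) (1 : C(X, ℝ)) = a * μ 1 + b * ν 1 := rfl
    rw [h1, hμ1, hν1, mul_one, mul_one, hab]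

/-- Separation: for a Kelvin-Planck theory there is a weak-star continuous linear
functional nonpositive on `hatP Pd` and strictly positive on nonzero nonnegative
measures placed in the second coordinate. -/
lemma exists_sep [CompactSpace X] {Pd : Set (VSp X)} (hKP : IsKelvinPlanck Pd) :
    ∃ g : VSp X →L[ℝ] ℝ, (∀ p ∈ hatP Pd, g p ≤ 0) ∧
      (∀ ν : Meas X, ν ∈ PosMeas X → ν ≠ 0 → 0 < g ((0 : Meas X), ν)) := by
  classical
  set prob : Set (Meas X) := {ν : Meas X | ν ∈ PosMeas X ∧ ν (1 : C(X, ℝ)) = 1} with hprob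
  set K : Set (VSp X) := ({0} : Set (Meas X)) ×ˢ prob with hK
  have hKc : IsCompact K := isCompact_singleton.prod isCompact_probSet
  have hKconv : Convex ℝ K := (convex_singleton _).prod convex_probSet
  have hCc : IsClosed (hatP Pd) := isClosed_closure
  have hCconv : Convex ℝ (hatP Pd) := hKP.1.2
  have hdisj : Disjoint K (hatP Pd) := by
    rw [Set.disjoint_left]
    rintro ⟨ρ, ν⟩ ⟨hρ, hν, h1⟩ hmem
    have hmem2 : ((ρ, ν) : VSp X) ∈ hatP Pd ∩ (({0} : Set (Meas X)) ×ˢ PosMeas X) :=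
      ⟨hmem, hρ, hν⟩
    rw [hKP.2] at hmem2
    have hν0 : ν = 0 := congrArg Prod.snd hmem2
    have hz : (0 : Meas X) (1 : C(X, ℝ)) = 0 := rfl
    rw [hν0, hz] at h1
    exact zero_ne_one h1
  obtain ⟨f, u, v, hfu, huv, hvf⟩ :=
    geometric_hahn_banach_compact_closed hKconv hKc hCconv hCc hdisj
  have h00 : (((0 : Meas X), (0 : Meas X)) : VSp X) ∈ hatP Pd := zero_mem_hatP hKP
  have hv0 : v < 0 := by
    have h := hvf _ h00
    have hz : f (((0 : Meas X), (0 : Meas X)) : VSp X) = 0 := map_zero f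
    linarith
  have hfC : ∀ p ∈ hatP Pd, 0 ≤ f p := by
    intro p hp
    by_contra hneg
    push_neg at hneg
    have hc : 0 < (v - 1) / f p := div_pos_of_neg_of_neg (by linarith) hneg
    have hmem := smul_mem_hatP hc.le hp
    have := hvf _ hmem
    rw [map_smul, smul_eq_mul, div_mul_cancel₀ _ (ne_of_lt hneg)] at this
    linarith
  refine ⟨-f, fun p hp => by simpa using hfC p hp, ?_⟩
  intro ν hν hne
  have hν1pos : 0 < ν (1 : C(X, ℝ)) := by
    rcases lt_or_eq_of_le (hν (1 : C(X, ℝ)) (fun x => by simp)) with h | h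
    · exact h
    · exact absurd (posMeas_eq_zero hν h.symm) hne
  set c : ℝ := (ν (1 : C(X, ℝ)))⁻¹ with hc
  have hcpos : 0 < c := inv_pos.mpr hν1pos
  have hπprob : (c • ν) ∈ prob := by
    constructor
    · intro g hg
      have h1 : (c • ν) g = c * ν g := rfl
      rw [h1]
      exact mul_nonneg hcpos.le (hν g hg)
    · have h1 : (c • ν) (1 : C(X, ℝ)) = c * ν (1 : C(X, ℝ)) := rfl
      rw [h1, hc, inv_mul_cancel₀ (ne_of_gt hν1pos)]
  have hπK : (((0 : Meas X), c • ν) : VSp X) ∈ K := ⟨rfl, hπprob⟩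
  have hfπ := hfu _ hπK
  have hu0 : u < 0 := lt_trans huv hv0
  have hdecomp : (((0 : Meas X), ν) : VSp X) =
      (ν (1 : C(X, ℝ))) • (((0 : Meas X), c • ν) : VSp X) := by
    have h2 : (ν (1 : C(X, ℝ))) • (c • ν) = ν := by
      rw [smul_smul, hc, mul_inv_cancel₀ (ne_of_gt hν1pos), one_smul]
    rw [Prod.smul_mk, smul_zero, h2]
  have : (-f) (((0 : Meas X), ν) : VSp X)
      = (ν (1 : C(X, ℝ))) * (-f (((0 : Meas X), c • ν) : VSp X)) := by
    rw [hdecomp, map_smul, smul_eq_mul]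
    ring_nf
    simp [mul_comm]
  rw [this]
  have hneg : 0 < -f (((0 : Meas X), c • ν) : VSp X) := by linarith
  exact mul_pos hν1pos hneg

/-- Key step: augmenting a theory by a passive heat transfer `(0, α - α')` from `hA` to `hB`,
when `hB ≻ hA`, forces the separating functional to be positive on the transfer. -/
lemma gw_pos [CompactSpace X] {P Pd : Set (VSp X)}
    (hPdT : IsThermoTheory Pd) (hPdP : P ⊆ hatP Pd)
    (g : VSp X →L[ℝ] ℝ) (hg0 : ∀ p ∈ hatP Pd, g p ≤ 0)
    (hgpos : ∀ ν : Meas X, ν ∈ PosMeas X → ν ≠ 0 → 0 < g ((0 : Meas X), ν))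
    {hA hB : Set X} (hot : Hotter P hB hA)
    {α α' : Meas X} (hα : α ∈ PosMeas X) (hα' : α' ∈ PosMeas X)
    (hsA : SuppIn α hA) (hsB : SuppIn α' hB)
    (hmass : α (1 : C(X, ℝ)) = α' (1 : C(X, ℝ))) (hmpos : 0 < α (1 : C(X, ℝ)))
    (h00 : (((0 : Meas X), (0 : Meas X)) : VSp X) ∈ hatP Pd) :
    0 < g (((0 : Meas X), α - α') : VSp X) := by
  set w : VSp X := (((0 : Meas X), α - α') : VSp X) with hw
  by_contra hgw
  push_neg at hgw
  set A : Set (VSp X) := {x | ∃ y ∈ hatP Pd, ∃ t : ℝ, 0 ≤ t ∧ x = y + t • w} with hA'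
  have hconeA : coneOf A = A := by
    apply Subset.antisymm
    · rintro _ ⟨c, hc, _, ⟨y, hy, t, ht, rfl⟩, rfl⟩
      refine ⟨c • y, smul_mem_hatP hc hy, c * t, mul_nonneg hc ht, ?_⟩
      rw [smul_add, smul_smul]
    · intro x hx
      exact ⟨1, zero_le_one, x, hx, (one_smul ℝ x).symm⟩
  have hhatA : hatP A = closure A := by rw [hatP, hconeA]
  have hAsub : hatP Pd ⊆ A := fun y hy => ⟨y, hy, 0, le_refl _, by rw [zero_smul, add_zero]⟩
  have hAconv : Convex ℝ A := by
    rintro _ ⟨y, hy, t, ht, rfl⟩ _ ⟨y', hy', s, hs, rfl⟩ a b ha hb hab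
    refine ⟨a • y + b • y', hPdT.2 hy hy' ha hb hab, a * t + b * s,
      add_nonneg (mul_nonneg ha ht) (mul_nonneg hb hs), ?_⟩
    module
  have hthermo : IsThermoTheory A := by
    constructor
    · rintro _ ⟨y, hy, t, ht, rfl⟩
      have hy1 : y.1 (1 : C(X, ℝ)) = 0 := hatP_fst_one hPdT hy
      have hfst : (y + t • w).1 = y.1 + t • w.1 := rfl
      have hw1 : w.1 = (0 : Meas X) := rfl
      rw [hfst, hw1, smul_zero, add_zero, hy1]
    · rw [hhatA]
      exact hAconv.closure
  have hPA : P ⊆ hatP A := fun p hp => hhatA ▸ subset_closure (hAsub (hPdP hp))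
  have hwA : w ∈ hatP A := by
    rw [hhatA]
    apply subset_closure
    refine ⟨(((0 : Meas X), (0 : Meas X)) : VSp X), h00, 1, zero_le_one, ?_⟩
    rw [one_smul]
    have : ((((0 : Meas X), (0 : Meas X)) : VSp X)) = (0 : VSp X) := rfl
    rw [this, zero_add]
  have hHT : IsPassiveHT A hA hB := ⟨α, α', hα, hα', hsA, hsB, hmass, hmpos, hwA⟩
  apply hot.2 A hthermo hPA hHT
  refine ⟨hthermo, ?_⟩
  apply Subset.antisymm
  · rintro ⟨ρ, ν⟩ ⟨hmem, hρ, hν⟩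
    have hρ0 : ρ = 0 := hρ
    rw [hhatA] at hmem
    have hgle : g ((ρ, ν) : VSp X) ≤ 0 := by
      have hsub : A ⊆ {x : VSp X | g x ≤ 0} := by
        rintro _ ⟨y, hy, t, ht, rfl⟩
        have : g (y + t • w) = g y + t * g w := by
          rw [map_add, map_smul, smul_eq_mul]
        simp only [mem_setOf_eq, this]
        have h1 := hg0 y hy
        nlinarith
      exact closure_minimal hsub (isClosed_le g.continuous continuous_const) hmem
    have hν0 : ν = 0 := by
      by_contra hne
      have := hgpos ν hν hne
      rw [hρ0] at hgle
      linarith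
    simp only [mem_singleton_iff, Prod.mk.injEq]
    exact ⟨hρ0, hν0⟩
  · intro x hx
    rw [mem_singleton_iff] at hx
    subst hx
    refine ⟨?_, rfl, ?_⟩
    · rw [hhatA]
      exact subset_closure (hAsub h00)
    · intro f _
      exact le_of_eq rfl

lemma dirac_posMeas (x : X) : dirac x ∈ PosMeas X := fun f hf => hf x

lemma dirac_suppIn {x : X} {h : Set X} (hx : x ∈ h) : SuppIn (dirac x) h :=
  fun f hf => hf x hx

lemma dirac_one (x : X) : (dirac x) (1 : C(X, ℝ)) = 1 := rfl

/-- Core lemma: if `h₁ ≻ h₂ ≻ h₃`, then no Kelvin-Planck theory extending `P` can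
contain a passive heat transfer from `h₃` to `h₁`. -/
lemma core_lemma [CompactSpace X] {P Pd : Set (VSp X)}
    {h₁ h₂ h₃ : Set X} {b₂ : X} (hb₂ : b₂ ∈ h₂)
    (H12 : Hotter P h₁ h₂) (H23 : Hotter P h₂ h₃)
    (hPdT : IsThermoTheory Pd) (hPdP : P ⊆ hatP Pd)
    (hHT : IsPassiveHT Pd h₃ h₁) : ¬ IsKelvinPlanck Pd := by
  intro hKP
  obtain ⟨μ₃, μ₁, hμ₃, hμ₁, hs₃, hs₁, hm, hmpos, hmem⟩ := hHT
  obtain ⟨g, hg0, hgpos⟩ := exists_sep hKP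
  have h00 : (((0 : Meas X), (0 : Meas X)) : VSp X) ∈ hatP Pd := zero_mem_hatP hKP
  have hd_app : ∀ f : C(X, ℝ), (μ₃ (1 : C(X, ℝ)) • dirac b₂ : Meas X) f
      = μ₃ (1 : C(X, ℝ)) * f b₂ := fun f => rfl
  have hd_pos : (μ₃ (1 : C(X, ℝ)) • dirac b₂ : Meas X) ∈ PosMeas X := by
    intro f hf
    rw [hd_app]
    exact mul_nonneg hmpos.le (hf b₂)
  have hd_supp : SuppIn (μ₃ (1 : C(X, ℝ)) • dirac b₂ : Meas X) h₂ := by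
    intro f hf
    rw [hd_app, hf b₂ hb₂, mul_zero]
  have hd1 : (μ₃ (1 : C(X, ℝ)) • dirac b₂ : Meas X) (1 : C(X, ℝ)) = μ₃ (1 : C(X, ℝ)) := by
    rw [hd_app]
    simp
  have gw : 0 < g (((0 : Meas X), (μ₃ (1 : C(X, ℝ)) • dirac b₂ : Meas X) - μ₁) : VSp X) := by
    apply gw_pos hPdT hPdP g hg0 hgpos H12 hd_pos hμ₁ hd_supp hs₁ _ _ h00
    · rw [hd1]
      exact hm
    · rw [hd1]
      exact hmpos
  have gu : 0 < g (((0 : Meas X), μ₃ - (μ₃ (1 : C(X, ℝ)) • dirac b₂ : Meas X)) : VSp X) := by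
    apply gw_pos hPdT hPdP g hg0 hgpos H23 hμ₃ hd_pos hs₃ hd_supp _ hmpos h00
    rw [hd1]
  have hsum : (((0 : Meas X), (μ₃ (1 : C(X, ℝ)) • dirac b₂ : Meas X) - μ₁) : VSp X)
        + (((0 : Meas X), μ₃ - (μ₃ (1 : C(X, ℝ)) • dirac b₂ : Meas X)) : VSp X)
      = (((0 : Meas X), μ₃ - μ₁) : VSp X) := by
    rw [Prod.mk_add_mk, add_zero]
    congr 1
    abel
  have hle := hg0 _ hmem
  have hadd := map_add g (((0 : Meas X), (μ₃ (1 : C(X, ℝ)) • dirac b₂ : Meas X) - μ₁) : VSp X)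
    (((0 : Meas X), μ₃ - (μ₃ (1 : C(X, ℝ)) • dirac b₂ : Meas X)) : VSp X)
  rw [hsum] at hadd
  linarith

lemma hotnessLevel_mem {P : Set (VSp X)} (hP : IsKelvinPlanck P) {h : Set X}
    (hh : IsHotnessLevel P h) : ∃ a, a ∈ h := by
  obtain ⟨a, rfl⟩ := hh
  refine ⟨a, ?_, ?_⟩ <;>
  · have : dirac (X := X) a - dirac a = 0 := sub_self _
    rw [this]
    exact zero_mem_hatP hP

lemma trivial_passiveHT {P : Set (VSp X)} (hP : IsKelvinPlanck P) {h : Set X} {a : X}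
    (ha : a ∈ h) : IsPassiveHT P h h := by
  refine ⟨dirac a, dirac a, dirac_posMeas a, dirac_posMeas a, dirac_suppIn ha,
    dirac_suppIn ha, rfl, ?_, ?_⟩
  · rw [dirac_one]
    exact one_pos
  · have : dirac (X := X) a - dirac a = 0 := sub_self _
    rw [this]
    exact zero_mem_hatP hP

lemma no_cycle [CompactSpace X] {P : Set (VSp X)} (hP : IsKelvinPlanck P)
    {h₁ h₂ : Set X} (hh₁ : IsHotnessLevel P h₁) (hh₂ : IsHotnessLevel P h₂)
    (H12 : Hotter P h₁ h₂) (H21 : Hotter P h₂ h₁) : False := by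
  obtain ⟨a, ha⟩ := hotnessLevel_mem hP hh₁
  obtain ⟨b, hb⟩ := hotnessLevel_mem hP hh₂
  exact core_lemma (h₃ := h₁) hb H12 H21 hP.1 (fun p hp => mem_hatP_of_mem hp)
    (trivial_passiveHT hP ha) hP

end AuxProof

/-- **Corollary.** For a Kelvin–Planck theory, the hotter-than relation `≻` is a
strict partial order on the set of hotness levels: it is irreflexive, antisymmetric
and transitive. -/
theorem hotter_strict_partial_order
    {X : Type*} [TopologicalSpace X] [CompactSpace X] [T2Space X]
    (P : Set (VSp X)) (hP : IsKelvinPlanck P) :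
    (∀ h : Set X, IsHotnessLevel P h → ¬ Hotter P h h) ∧
    (∀ h h' : Set X, IsHotnessLevel P h → IsHotnessLevel P h' →
      Hotter P h' h → ¬ Hotter P h h') ∧
    (∀ h₁ h₂ h₃ : Set X, IsHotnessLevel P h₁ → IsHotnessLevel P h₂ →
      IsHotnessLevel P h₃ → Hotter P h₁ h₂ → Hotter P h₂ h₃ → Hotter P h₁ h₃) := by
  refine ⟨?_, ?_, ?_⟩
  · intro h _ H
    exact H.1 rfl
  · intro h h' hh hh' H'h Hh'
    exact no_cycle hP hh' hh H'h Hh'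
  · intro h₁ h₂ h₃ hh₁ hh₂ hh₃ H12 H23
    obtain ⟨b₂, hb₂⟩ := hotnessLevel_mem hP hh₂
    refine ⟨?_, ?_⟩
    · intro heq
      subst heq
      exact no_cycle hP hh₁ hh₂ H12 H23
    · intro Pd hT hsub hHT
      exact core_lemma hb₂ H12 H23 hT hsub hHT
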